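/- arXiv:0707.4468 — 5 statements merged into one kernel-verified Lean document; each statement's English description precedes it below -/
import Mathlib

section
/- For every real number α with α > 1/4 there exists a constant C = C(α) ∈ ℕ such that for all positive integers r, s, n satisfying n > 0, (s : ℝ) > (n : ℝ)^α and gcd(r, s) = 1, the number of positive divisors of n that are congruent to r modulo s is at most C. -/
open Finset

lemma layer_ineq (q N : ℕ) : (2*q+1) * N ≤ q*(q+1) + N*N := by
  rcases le_or_gt N q with h | h
  · zify at h ⊢
    nlinarith [mul_nonneg (sub_nonneg.mpr h) (by linarith : (0:ℤ) ≤ (q:ℤ) + 1 - N)]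
  · have h' : q + 1 ≤ N := h
    zify at h' ⊢
    nlinarith [mul_nonneg (by linarith : (0:ℤ) ≤ (N:ℤ) - q) (by linarith : (0:ℤ) ≤ (N:ℤ) - (q+1))]

lemma sum_ind (V x : ℕ) (hx : x ≤ V) :
    (∑ t ∈ range V, if t < x then (1:ℕ) else 0) = x := by
  have h : (range V).filter (fun t => t < x) = range x := by
    ext t; simp only [mem_filter, mem_range]; omega
  rw [Finset.sum_ite, Finset.sum_const, Finset.sum_const, h]
  simp

lemma sum_ind_min (V x y : ℕ) (hx : x ≤ V) :
    (∑ t ∈ range V, (if t < x then (1:ℕ) else 0) * (if t < y then 1 else 0)) = min x y := by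
  have h1 : ∀ t, (if t < x then (1:ℕ) else 0) * (if t < y then 1 else 0)
      = if t < min x y then 1 else 0 := by
    intro t
    by_cases h1 : t < x <;> by_cases h2 : t < y <;> simp [h1, h2, lt_min_iff]
  simp_rw [h1]
  exact sum_ind V _ (le_trans (min_le_left _ _) hx)

lemma square_min_sum (q V : ℕ) (v : Fin (2*q+1) → ℕ) (hv : ∀ i, v i ≤ V) :
    (2*q+1) * ∑ i, v i ≤ q*(q+1)*V + ∑ a, ∑ b, min (v a) (v b) := by
  have hv' : ∀ i : Fin (2*q+1), v i = ∑ t ∈ range V, (if t < v i then (1:ℕ) else 0) :=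
    fun i => (sum_ind V _ (hv i)).symm
  have hmin : ∀ a b : Fin (2*q+1), min (v a) (v b)
      = ∑ t ∈ range V, (if t < v a then (1:ℕ) else 0) * (if t < v b then 1 else 0) :=
    fun a b => (sum_ind_min V _ _ (hv a)).symm
  calc (2*q+1) * ∑ i, v i
      = ∑ t ∈ range V, (2*q+1) * (∑ i, if t < v i then (1:ℕ) else 0) := by
        rw [← Finset.mul_sum]
        congr 1
        rw [show (∑ i : Fin (2*q+1), v i)
            = ∑ i : Fin (2*q+1), ∑ t ∈ range V, (if t < v i then (1:ℕ) else 0) from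
          Finset.sum_congr rfl fun i _ => hv' i]
        rw [Finset.sum_comm]
    _ ≤ ∑ t ∈ range V, (q*(q+1)
          + (∑ i, if t < v i then (1:ℕ) else 0) * (∑ i, if t < v i then (1:ℕ) else 0)) :=
        Finset.sum_le_sum (fun t _ => layer_ineq q _)
    _ = q*(q+1)*V + ∑ a, ∑ b, min (v a) (v b) := by
        rw [Finset.sum_add_distrib, Finset.sum_const, card_range, smul_eq_mul, mul_comm]
        congr 1
        simp_rw [hmin]
        have h1 : ∀ t ∈ range V,
            (∑ i : Fin (2*q+1), if t < v i then (1:ℕ) else 0)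
              * (∑ i : Fin (2*q+1), if t < v i then (1:ℕ) else 0)
            = ∑ a : Fin (2*q+1), ∑ b : Fin (2*q+1),
                (if t < v a then (1:ℕ) else 0) * (if t < v b then 1 else 0) := by
          intro t _
          rw [Finset.sum_mul_sum]
        rw [Finset.sum_congr rfl h1, Finset.sum_comm]
        apply Finset.sum_congr rfl
        intro a _
        rw [Finset.sum_comm]


lemma core_ineq (q V : ℕ) (v : Fin (2*q+1) → ℕ) (hv : ∀ i, v i ≤ V) :
    2*q * ∑ i, v i ≤ q*(q+1)*V
      + ∑ p ∈ (univ : Finset (Fin (2*q+1))).offDiag, min (v p.1) (v p.2) := by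
  have hsplit : (∑ a, ∑ b, min (v a) (v b))
      = (∑ i, v i) + ∑ p ∈ (univ : Finset (Fin (2*q+1))).offDiag, min (v p.1) (v p.2) := by
    rw [← Finset.sum_product']
    rw [← Finset.diag_union_offDiag (univ : Finset (Fin (2*q+1)))]
    rw [Finset.sum_union (Finset.disjoint_diag_offDiag _)]
    congr 1
    rw [Finset.sum_diag]
    simp
  have h := square_min_sum q V v hv
  rw [hsplit] at h
  have h2 : (2*q+1) * ∑ i, v i = 2*q * ∑ i, v i + ∑ i, v i := by ring
  omega

lemma gcd_eq_one_of_modEq {d r s : ℕ} (h : d ≡ r [MOD s]) (hrs : Nat.gcd r s = 1) :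
    Nat.gcd s d = 1 := by
  rw [Nat.gcd_rec]
  rw [Nat.ModEq] at h
  rw [h, ← Nat.gcd_rec, Nat.gcd_comm]
  exact hrs

lemma key_ineq (n s r q : ℕ) (hn : 0 < n) (hrs : Nat.gcd r s = 1)
    (d : Fin (2*q+1) → ℕ) (hmono : StrictMono d)
    (hdvd : ∀ i, d i ∣ n) (hmod : ∀ i, d i ≡ r [MOD s]) :
    (s * d 0) ^ (2*q*(2*q+1))
      ≤ n ^ (q*(q+1)) * (d (Fin.last (2*q)) - d 0) ^ (2*q*(2*q+1)) := by
  have hd0 : ∀ i, 0 < d i := fun i => Nat.pos_of_dvd_of_pos (hdvd i) hn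
  set O := (univ : Finset (Fin (2*q+1))).offDiag with hO
  set df : Fin (2*q+1) × Fin (2*q+1) → ℕ :=
    fun p => max (d p.1) (d p.2) - min (d p.1) (d p.2) with hdf
  have hcard : O.card = 2*q*(2*q+1) := by
    rw [hO, Finset.offDiag_card, Finset.card_univ, Fintype.card_fin]
    have h1 : (2*q+1) * (2*q+1) = 2*q*(2*q+1) + (2*q+1) := by ring
    omega
  have hsdvd : ∀ p ∈ O, s ∣ df p := by
    intro p _
    have hmm : d p.1 ≡ d p.2 [MOD s] := (hmod p.1).trans (hmod p.2).symm
    rcases le_total (d p.1) (d p.2) with h | h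
    · rw [hdf]; dsimp only
      rw [max_eq_right h, min_eq_left h]
      exact (Nat.modEq_iff_dvd' h).mp hmm
    · rw [hdf]; dsimp only
      rw [max_eq_left h, min_eq_right h]
      exact (Nat.modEq_iff_dvd' h).mp hmm.symm
  have hdfpos : ∀ p ∈ O, 0 < df p := by
    intro p hp
    have hne : p.1 ≠ p.2 := (Finset.mem_offDiag.mp hp).2.2
    have : d p.1 ≠ d p.2 := fun h => hne (hmono.injective h)
    exact Nat.sub_pos_of_lt (min_lt_max.mpr this)
  -- Lemma A
  have hA : s ^ (2*q*(2*q+1)) ∣ ∏ p ∈ O, df p := by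
    rw [← hcard, ← Finset.prod_const]
    exact Finset.prod_dvd_prod_of_dvd _ _ hsdvd
  have hprod0 : (∏ p ∈ O, df p) ≠ 0 :=
    Finset.prod_ne_zero_iff.mpr fun p hp => (hdfpos p hp).ne'
  -- Lemma B
  have hB : (∏ i, d i ^ (2*q)) ∣ n ^ (q*(q+1)) * ∏ p ∈ O, df p := by
    have hL0 : (∏ i : Fin (2*q+1), d i ^ (2*q)) ≠ 0 :=
      Finset.prod_ne_zero_iff.mpr fun i _ => pow_ne_zero _ (hd0 i).ne'
    have hR0 : n ^ (q*(q+1)) * ∏ p ∈ O, df p ≠ 0 :=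
      mul_ne_zero (pow_ne_zero _ hn.ne') hprod0
    rw [← Nat.factorization_le_iff_dvd hL0 hR0]
    rw [Finsupp.le_def]
    intro ℓ
    by_cases hp : ℓ.Prime
    · set v : Fin (2*q+1) → ℕ := fun i => (d i).factorization ℓ with hv
      set V : ℕ := n.factorization ℓ with hV
      have hvV : ∀ i, v i ≤ V := by
        intro i
        have := (Nat.factorization_le_iff_dvd (hd0 i).ne' hn.ne').mpr (hdvd i)
        exact Finsupp.le_def.mp this ℓ
      have hLfact : (∏ i : Fin (2*q+1), d i ^ (2*q)).factorization ℓ = 2*q * ∑ i, v i := by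
        rw [Nat.factorization_prod (fun i _ => pow_ne_zero _ (hd0 i).ne')]
        rw [Finset.sum_apply']
        rw [Finset.mul_sum]
        apply Finset.sum_congr rfl
        intro i _
        rw [Nat.factorization_pow, Finsupp.smul_apply, smul_eq_mul]
      have hRfact : (n ^ (q*(q+1)) * ∏ p ∈ O, df p).factorization ℓ
          = q*(q+1)*V + ∑ p ∈ O, (df p).factorization ℓ := by
        rw [Nat.factorization_mul (pow_ne_zero _ hn.ne') hprod0]
        rw [Finsupp.add_apply, Nat.factorization_pow, Finsupp.smul_apply, smul_eq_mul]
        congr 1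
        rw [Nat.factorization_prod (fun p hp' => (hdfpos p hp').ne')]
        rw [Finset.sum_apply']
      rw [hLfact, hRfact]
      have hmin : ∀ p ∈ O, min (v p.1) (v p.2) ≤ (df p).factorization ℓ := by
        intro p hp'
        have h1 : ℓ ^ (min (v p.1) (v p.2)) ∣ d p.1 :=
          dvd_trans (pow_dvd_pow _ (min_le_left _ _)) (Nat.ordProj_dvd _ _)
        have h2 : ℓ ^ (min (v p.1) (v p.2)) ∣ d p.2 :=
          dvd_trans (pow_dvd_pow _ (min_le_right _ _)) (Nat.ordProj_dvd _ _)
        have hmax : ℓ ^ (min (v p.1) (v p.2)) ∣ max (d p.1) (d p.2) := by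
          rcases max_choice (d p.1) (d p.2) with h | h <;> rw [h] <;> assumption
        have hminn : ℓ ^ (min (v p.1) (v p.2)) ∣ min (d p.1) (d p.2) := by
          rcases min_choice (d p.1) (d p.2) with h | h <;> rw [h] <;> assumption
        have hd : ℓ ^ (min (v p.1) (v p.2)) ∣ df p := Nat.dvd_sub hmax hminn
        exact (Nat.Prime.pow_dvd_iff_le_factorization hp (hdfpos p hp').ne').mp hd
      calc 2*q * ∑ i, v i ≤ q*(q+1)*V + ∑ p ∈ O, min (v p.1) (v p.2) :=
            core_ineq q V v hvV
        _ ≤ q*(q+1)*V + ∑ p ∈ O, (df p).factorization ℓ :=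
            Nat.add_le_add_left (Finset.sum_le_sum hmin) _
    · simp [Nat.factorization_eq_zero_of_not_prime _ hp]
  -- combine
  have hcop : Nat.Coprime (s ^ (2*q*(2*q+1))) (∏ i, d i ^ (2*q)) := by
    apply Nat.Coprime.pow_left
    apply Nat.Coprime.prod_right
    intro i _
    exact Nat.Coprime.pow_right _ (gcd_eq_one_of_modEq (hmod i) hrs)
  have hdvd2 : s ^ (2*q*(2*q+1)) * ∏ i, d i ^ (2*q)
      ∣ n ^ (q*(q+1)) * ∏ p ∈ O, df p :=
    hcop.mul_dvd_of_dvd_of_dvd (hA.mul_left _) hB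
  have hRpos : 0 < n ^ (q*(q+1)) * ∏ p ∈ O, df p :=
    Nat.pos_of_ne_zero (mul_ne_zero (pow_ne_zero _ hn.ne') hprod0)
  have hle := Nat.le_of_dvd hRpos hdvd2
  have hlow : (s * d 0) ^ (2*q*(2*q+1)) ≤ s ^ (2*q*(2*q+1)) * ∏ i, d i ^ (2*q) := by
    rw [mul_pow]
    apply mul_le_mul_right
    calc (d 0) ^ (2*q*(2*q+1)) = ∏ _i : Fin (2*q+1), (d 0)^(2*q) := by
          rw [Finset.prod_const, Finset.card_univ, Fintype.card_fin, ← pow_mul]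
      _ ≤ ∏ i, d i ^ (2*q) := Finset.prod_le_prod (fun _ _ => Nat.zero_le _)
          (fun i _ => Nat.pow_le_pow_left (hmono.monotone (Fin.zero_le i)) _)
  have hup : ∏ p ∈ O, df p ≤ (d (Fin.last (2*q)) - d 0) ^ (2*q*(2*q+1)) := by
    rw [← hcard, ← Finset.prod_const]
    apply Finset.prod_le_prod (fun _ _ => Nat.zero_le _)
    intro p _
    apply tsub_le_tsub
    · exact max_le (hmono.monotone (Fin.le_last _)) (hmono.monotone (Fin.le_last _))
    · exact le_min (hmono.monotone (Fin.zero_le _)) (hmono.monotone (Fin.zero_le _))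
  calc (s * d 0) ^ (2*q*(2*q+1)) ≤ s ^ (2*q*(2*q+1)) * ∏ i, d i ^ (2*q) := hlow
    _ ≤ n ^ (q*(q+1)) * ∏ p ∈ O, df p := hle
    _ ≤ n ^ (q*(q+1)) * (d (Fin.last (2*q)) - d 0) ^ (2*q*(2*q+1)) :=
        Nat.mul_le_mul le_rfl hup

/-- For every real `α > 1/4` there exists a constant `C = C(α)` such that for all
positive integers `r, s, n` with `(s : ℝ) > (n : ℝ) ^ α` and `gcd(r, s) = 1`, the number of
positive divisors of `n` congruent to `r` modulo `s` is at most `C`. -/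
theorem stmt_0 :
    ∀ α : ℝ, α > 1 / 4 →
      ∃ C : ℕ, ∀ r s n : ℕ, 0 < r → 0 < s → 0 < n →
        (s : ℝ) > (n : ℝ) ^ α → Nat.gcd r s = 1 →
        (n.divisors.filter fun d => d ≡ r [MOD s]).card ≤ C := by
  intro α hα
  have hα4 : 0 < α - 1/4 := by linarith
  set q : ℕ := ⌈(α - 1/4)⁻¹⌉₊ + 1 with hqdef
  have hq1 : 1 ≤ q := by omega
  have hqge : (α - 1/4)⁻¹ ≤ (q : ℝ) := by
    calc (α - 1/4)⁻¹ ≤ (⌈(α - 1/4)⁻¹⌉₊ : ℝ) := Nat.le_ceil _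
      _ ≤ (q : ℝ) := by rw [hqdef]; push_cast; linarith
  set M₂ : ℕ := 2*q*(2*q+1) with hM₂def
  set Q₂ : ℕ := q*(q+1) with hQ₂def
  have hM₂pos : 0 < M₂ := by positivity
  have hM₂R : (0:ℝ) < (M₂ : ℝ) := by exact_mod_cast hM₂pos
  set β : ℝ := (Q₂ : ℝ) / (M₂ : ℝ) with hβdef
  have hβα : β < α := by
    rw [hβdef, div_lt_iff₀ hM₂R]
    have hq0 : (0:ℝ) < (q:ℝ) := by exact_mod_cast hq1
    have h1 : 1 ≤ (α - 1/4) * (q:ℝ) := by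
      have h := mul_le_mul_of_nonneg_left hqge (le_of_lt hα4)
      rwa [mul_inv_cancel₀ hα4.ne'] at h
    have hcast : (Q₂ : ℝ) = (q:ℝ) * ((q:ℝ)+1) := by rw [hQ₂def]; push_cast; ring
    have hcast2 : (M₂ : ℝ) = 2*(q:ℝ)*(2*(q:ℝ)+1) := by rw [hM₂def]; push_cast; ring
    rw [hcast, hcast2]
    nlinarith [hq0]
  set γ : ℝ := α - β with hγdef
  have hγpos : 0 < γ := by rw [hγdef]; linarith
  set J : ℕ := ⌈γ⁻¹⌉₊ + 1 with hJdef
  have hJ1 : 1 ≤ J := by omega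
  have hJγ : 1 < γ * (J : ℝ) := by
    have h1 : γ⁻¹ ≤ (⌈γ⁻¹⌉₊ : ℝ) := Nat.le_ceil _
    have h2 : γ * (J:ℝ) = γ * (⌈γ⁻¹⌉₊ : ℝ) + γ := by rw [hJdef]; push_cast; ring
    have h3 : 1 = γ * γ⁻¹ := by field_simp
    nlinarith
  refine ⟨2*q*J, ?_⟩
  intro r s n hr hs hn hsn hgcd
  by_contra hcon
  push_neg at hcon
  set F := n.divisors.filter (fun d => d ≡ r [MOD s]) with hFdef
  set k := F.card with hkdef
  have hkk : 2*q*J < k := hcon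
  set e := F.orderIsoOfFin rfl with hedef
  have hmemF : ∀ i : Fin k, ((e i : ℕ)) ∈ F := fun i => (e i).2
  have hprops : ∀ x ∈ F, x ∣ n ∧ 0 < x ∧ x ≤ n ∧ x ≡ r [MOD s] := by
    intro x hx
    rw [hFdef, Finset.mem_filter, Nat.mem_divisors] at hx
    have hxpos : 0 < x := Nat.pos_of_dvd_of_pos hx.1.1 hn
    exact ⟨hx.1.1, hxpos, Nat.le_of_dvd hn hx.1.1, hx.2⟩
  have hemono : StrictMono (fun i : Fin k => ((e i : ℕ))) := by
    intro i j hij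
    exact_mod_cast e.strictMono hij
  set g : ℕ → ℕ := fun i => if h : i < k then ((e ⟨i, h⟩ : ℕ)) else 0 with hgdef
  have hgmem : ∀ i, i < k → g i ∈ F := by
    intro i h
    rw [hgdef]
    simp only [h, dif_pos]
    exact hmemF _
  have hgmono : ∀ i j, i < j → j < k → g i < g j := by
    intro i j hij hjk
    have hik : i < k := lt_trans hij hjk
    rw [hgdef]
    simp only [hik, hjk, dif_pos]
    exact hemono (Fin.mk_lt_mk.mpr hij)
  have hidx : ∀ j, j ≤ J → 2*q*j < k := fun j hj =>
    lt_of_le_of_lt (Nat.mul_le_mul le_rfl hj) hkk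
  have hnRpos : (0:ℝ) < (n:ℝ) := by exact_mod_cast hn
  have hnR1 : (1:ℝ) ≤ (n:ℝ) := by exact_mod_cast hn
  have main : ∀ j, j ≤ J → (n:ℝ) ^ (γ * (j:ℝ)) ≤ (g (2*q*j) : ℝ) := by
    intro j
    induction j with
    | zero =>
      intro hj
      simp only [Nat.cast_zero, mul_zero, Real.rpow_zero]
      have := (hprops _ (hgmem _ (hidx 0 hj))).2.1
      exact_mod_cast this
    | succ j ih =>
      intro hj
      have hj' : j ≤ J := Nat.le_of_succ_le hj
      have ihj := ih hj'
      have harith : 2*q*(j+1) = 2*q*j + 2*q := by ring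
      have hlt : ∀ t : ℕ, t < 2*q+1 → 2*q*j + t < k := by
        intro t ht
        have h1 := hidx (j+1) hj
        omega
      set d : Fin (2*q+1) → ℕ := fun t => g (2*q*j + t.1) with hddef
      have hdmono : StrictMono d := by
        intro a b hab
        rw [hddef]
        exact hgmono _ _ (by omega) (hlt _ b.2)
      have hdmem : ∀ t : Fin (2*q+1), d t ∈ F := fun t => hgmem _ (hlt _ t.2)
      have hkey := key_ineq n s r q hn hgcd d hdmono
        (fun t => (hprops _ (hdmem t)).1) (fun t => (hprops _ (hdmem t)).2.2.2)
      have hd0eq : d 0 = g (2*q*j) := by simp [hddef]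
      have hdlast : d (Fin.last (2*q)) = g (2*q*(j+1)) := by
        have harith2 : 2*q*j + 2*q = 2*q*(j+1) := by ring
        rw [hddef]
        simp only [Fin.val_last]
        rw [harith2]
      rw [hd0eq, hdlast] at hkey
      set x₀ : ℝ := (g (2*q*j) : ℝ) with hx₀def
      set x₁ : ℝ := (g (2*q*(j+1)) : ℝ) with hx₁def
      have hx01 : g (2*q*j) ≤ g (2*q*(j+1)) :=
        le_of_lt (hgmono _ _ (by omega) (hidx (j+1) hj))
      have hkeyR : ((s:ℝ) * x₀)^M₂ ≤ (n:ℝ)^(Q₂:ℕ) * (x₁ - x₀)^M₂ := by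
        have hc := (Nat.cast_le (α := ℝ)).mpr hkey
        rw [hx₀def, hx₁def]
        push_cast [Nat.cast_sub hx01] at hc ⊢
        convert hc using 2 <;> try ring
      have hx₀pos : (0:ℝ) < x₀ := by
        rw [hx₀def]
        exact_mod_cast (hprops _ (hgmem _ (hidx j hj'))).2.1
      have hΔ0 : (0:ℝ) ≤ x₁ - x₀ := by
        rw [hx₀def, hx₁def]
        have := (Nat.cast_le (α := ℝ)).mpr hx01
        linarith
      have hstrict : ((n:ℝ)^α * x₀)^M₂ < ((s:ℝ) * x₀)^M₂ :=
        pow_lt_pow_left₀ (mul_lt_mul_of_pos_right hsn hx₀pos)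
          (by positivity) hM₂pos.ne'
      have hexp : ((n:ℝ)^γ)^(M₂:ℕ) * (n:ℝ)^(Q₂:ℕ) = ((n:ℝ)^α)^(M₂:ℕ) := by
        rw [← Real.rpow_natCast ((n:ℝ)^γ) M₂, ← Real.rpow_natCast ((n:ℝ)^α) M₂,
          ← Real.rpow_natCast (n:ℝ) Q₂, ← Real.rpow_mul hnRpos.le,
          ← Real.rpow_mul hnRpos.le, ← Real.rpow_add hnRpos]
        congr 1
        rw [hγdef, hβdef]
        field_simp
        try ring
      have h1 : ((n:ℝ)^γ * x₀)^M₂ * (n:ℝ)^(Q₂:ℕ) = ((n:ℝ)^α * x₀)^M₂ := by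
        rw [mul_pow, mul_pow, mul_right_comm, hexp]
      have hQpos : (0:ℝ) < (n:ℝ)^(Q₂:ℕ) := by positivity
      have hAB : ((n:ℝ)^γ * x₀)^M₂ < (x₁ - x₀)^M₂ := by
        have h2 : ((n:ℝ)^γ * x₀)^M₂ * (n:ℝ)^(Q₂:ℕ) < ((x₁ - x₀))^M₂ * (n:ℝ)^(Q₂:ℕ) := by
          rw [h1]
          calc ((n:ℝ)^α * x₀)^M₂ < ((s:ℝ) * x₀)^M₂ := hstrict
            _ ≤ (n:ℝ)^(Q₂:ℕ) * (x₁ - x₀)^M₂ := hkeyR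
            _ = (x₁ - x₀)^M₂ * (n:ℝ)^(Q₂:ℕ) := mul_comm _ _
        exact lt_of_mul_lt_mul_right h2 hQpos.le
      have hAB' : (n:ℝ)^γ * x₀ < x₁ - x₀ := lt_of_pow_lt_pow_left₀ M₂ hΔ0 hAB
      have hrw : γ * ((j+1 : ℕ):ℝ) = γ * (j:ℝ) + γ := by push_cast; ring
      rw [hrw, Real.rpow_add hnRpos]
      have hγn : (0:ℝ) ≤ (n:ℝ)^γ := Real.rpow_nonneg hnRpos.le _
      have hmul : (n:ℝ)^(γ*(j:ℝ)) * (n:ℝ)^γ ≤ x₀ * (n:ℝ)^γ :=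
        mul_le_mul_of_nonneg_right ihj hγn
      have hcomm : x₀ * (n:ℝ)^γ = (n:ℝ)^γ * x₀ := mul_comm _ _
      linarith [hAB', hmul, hx₀pos, hcomm]
  rcases eq_or_lt_of_le (show 1 ≤ n from hn) with h1 | hn2
  · have hcard1 : k ≤ 1 := by
      rw [hkdef, hFdef, ← h1]
      calc (Nat.divisors 1 |>.filter (fun d => d ≡ r [MOD s])).card
          ≤ (Nat.divisors 1).card := Finset.card_filter_le _ _
        _ = 1 := by rw [Nat.divisors_one]; simp
    have h2 : 2 ≤ 2*q*J := by
      calc 2 = 2*1*1 := by ring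
        _ ≤ 2*q*J := Nat.mul_le_mul (Nat.mul_le_mul le_rfl hq1) hJ1
    omega
  · have hmain := main J le_rfl
    have hub : (g (2*q*J) : ℝ) ≤ (n:ℝ) := by
      exact_mod_cast (hprops _ (hgmem _ (hidx J le_rfl))).2.2.1
    have hnR1' : (1:ℝ) < (n:ℝ) := by exact_mod_cast hn2
    have hlowb : (n:ℝ) < (n:ℝ)^(γ*(J:ℝ)) := by
      conv_lhs => rw [← Real.rpow_one (n:ℝ)]
      exact Real.rpow_lt_rpow_of_exponent_lt hnR1' hJγ
    linarith
end

section
/- Let ε ≥ 0 be a real number and let p, q, N be positive real numbers with N = p·q, p ≤ q ≤ 2p, and √N − p ≤ N^{1/4 + ε}. Then p + q − 2√N ≤ √2 · N^{2ε}. -/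
/-- Let `ε ≥ 0` and let `p, q, N` be positive reals with `N = p * q`, `p ≤ q ≤ 2p` and
`√N − p ≤ N^(1/4 + ε)`. Then `p + q − 2√N ≤ √2 * N^(2ε)`. -/
theorem stmt_7 (ε p q N : ℝ) (hε : 0 ≤ ε) (hp : 0 < p) (hq : 0 < q) (hN : 0 < N)
    (hpq : N = p * q) (h1 : p ≤ q) (h2 : q ≤ 2 * p)
    (hclose : Real.sqrt N - p ≤ N ^ (1 / 4 + ε)) :
    p + q - 2 * Real.sqrt N ≤ Real.sqrt 2 * N ^ (2 * ε) := by
  have hsN : Real.sqrt N ^ 2 = N := Real.sq_sqrt hN.le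
  have hps : p ≤ Real.sqrt N := by
    nlinarith [Real.sqrt_le_sqrt (show p^2 ≤ N by nlinarith), Real.sqrt_sq hp.le]
  -- identity
  have hid : p + q - 2 * Real.sqrt N = (Real.sqrt N - p)^2 / p := by
    field_simp
    nlinarith [hsN]
  -- squared bound
  have hsq : (Real.sqrt N - p)^2 ≤ (N ^ (1/4 + ε : ℝ))^2 := by
    apply pow_le_pow_left₀ (by linarith) hclose
  have hrw : (N ^ (1/4 + ε : ℝ))^2 = Real.sqrt N * N ^ (2 * ε) := by
    rw [← Real.rpow_natCast (N ^ (1/4 + ε : ℝ)) 2, ← Real.rpow_mul hN.le,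
      Real.sqrt_eq_rpow, ← Real.rpow_add hN]
    norm_num
    ring_nf
  have hsqrt2 : Real.sqrt N ≤ Real.sqrt 2 * p := by
    rw [show Real.sqrt 2 * p = Real.sqrt (2 * p^2) by
      rw [Real.sqrt_mul (by norm_num), Real.sqrt_sq hp.le]]
    apply Real.sqrt_le_sqrt; nlinarith
  have hNe : (0:ℝ) ≤ N ^ (2 * ε) := Real.rpow_nonneg hN.le _
  rw [hid]
  rw [div_le_iff₀ hp]
  calc (Real.sqrt N - p)^2 ≤ Real.sqrt N * N ^ (2 * ε) := by rw [← hrw]; exact hsq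
    _ ≤ (Real.sqrt 2 * p) * N ^ (2 * ε) := mul_le_mul_of_nonneg_right hsqrt2 hNe
    _ = Real.sqrt 2 * N ^ (2 * ε) * p := by ring
end

section
/- Let r ≥ 1 and p > 0 be real numbers, let u be a real number with q := r·p + u > 0, and set N = p·q. Then |√(N/r) − p| ≤ |u|/r and |√(r·N) − q| ≤ |u|. -/
lemma key_sqrt (a b : ℝ) (ha : 0 < a) (hb : 0 < b) :
    |Real.sqrt (a * b) - a| ≤ |b - a| := by
  have hsa := Real.sqrt_pos.mpr ha
  have hsb := Real.sqrt_pos.mpr hb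
  have h1 : Real.sqrt (a * b) = Real.sqrt a * Real.sqrt b :=
    Real.sqrt_mul ha.le b
  have h2 : a = Real.sqrt a * Real.sqrt a := (Real.mul_self_sqrt ha.le).symm
  have hdiff : (Real.sqrt b - Real.sqrt a) * (Real.sqrt b + Real.sqrt a) = b - a := by
    have := Real.sq_sqrt hb.le
    have := Real.sq_sqrt ha.le
    nlinarith
  have habs : |Real.sqrt b - Real.sqrt a| * (Real.sqrt b + Real.sqrt a) = |b - a| := by
    rw [← hdiff, abs_mul, abs_of_pos (add_pos hsb hsa)]
  calc |Real.sqrt (a * b) - a|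
      = Real.sqrt a * |Real.sqrt b - Real.sqrt a| := by
        rw [h1]; nth_rewrite 2 [h2]
        rw [← mul_sub, abs_mul, abs_of_pos hsa]
    _ ≤ (Real.sqrt b + Real.sqrt a) * |Real.sqrt b - Real.sqrt a| := by
        apply mul_le_mul_of_nonneg_right (by linarith) (abs_nonneg _)
    _ = |b - a| := by rw [mul_comm]; exact habs

/-- Let `r ≥ 1`, `p > 0` be reals, `u` a real with `q := r * p + u > 0`, and `N = p * q`.
Then `|√(N/r) − p| ≤ |u|/r` and `|√(rN) − q| ≤ |u|`. -/
theorem stmt_9 (r p u q N : ℝ) (hr : 1 ≤ r) (hp : 0 < p)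
    (hqdef : q = r * p + u) (hq : 0 < q) (hN : N = p * q) :
    |Real.sqrt (N / r) - p| ≤ |u| / r ∧ |Real.sqrt (r * N) - q| ≤ |u| := by
  have hr0 : (0:ℝ) < r := by linarith
  constructor
  · have e1 : N / r = p * (q / r) := by field_simp [hN]; exact hN
    have := key_sqrt p (q / r) hp (div_pos hq hr0)
    rw [e1]
    have e2 : q / r - p = u / r := by field_simp [hqdef]; linarith
    rw [e2, abs_div, abs_of_pos hr0] at this
    exact this
  · have e1 : r * N = q * (q - u) := by rw [hN, hqdef]; ring
    have hqu : 0 < q - u := by rw [hqdef]; nlinarith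
    have := key_sqrt q (q - u) hq hqu
    rw [e1]
    simpa using this
end

section
/- Let n ≥ 1 and d ≥ 0 be integers, and let a and b be nonzero polynomials in n variables over ℤ such that b is a multiple of a in ℤ[x₁,…,xₙ] and both a and b have degree at most d in each variable separately. Then the ℓ² norm of b satisfies ‖b‖₂ ≥ 2^{−(d+1)ⁿ + 1}·‖a‖_∞, where ‖b‖₂ = √(∑_e b_e²) is the square root of the sum of the squares of the coefficients of b and ‖a‖_∞ = max_e |a_e| is the maximum absolute value of a coefficient of a. -/
open Polynomial

noncomputable section MignotteAux

/-- sum of `normSq` of the coefficients of a complex polynomial -/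
def nuC (p : ℂ[X]) : ℝ := ∑ k ∈ p.support, Complex.normSq (p.coeff k)

lemma nuC_nonneg (p : ℂ[X]) : 0 ≤ nuC p :=
  Finset.sum_nonneg fun _ _ => Complex.normSq_nonneg _

lemma nuC_eq_range (p : ℂ[X]) {N : ℕ} (h : p.natDegree < N) :
    nuC p = ∑ k ∈ Finset.range N, Complex.normSq (p.coeff k) := by
  refine Finset.sum_subset (fun k hk => Finset.mem_range.2 ?_) (fun k _ hk => ?_)
  · exact lt_of_le_of_lt (le_natDegree_of_mem_supp k hk) h
  · rw [notMem_support_iff.1 hk, map_zero]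

lemma normSq_leadingCoeff_le_nuC (p : ℂ[X]) : Complex.normSq p.leadingCoeff ≤ nuC p := by
  by_cases hp : p = 0
  · simp [hp, nuC]
  · exact Finset.single_le_sum (fun k _ => Complex.normSq_nonneg _)
      (natDegree_mem_support_of_nonzero hp)

lemma flip_key (r x y : ℂ) :
    Complex.normSq (x - r * y) =
      Complex.normSq ((starRingEnd ℂ) r * x - y) +
        (1 - Complex.normSq r) * (Complex.normSq x - Complex.normSq y) := by
  simp only [Complex.normSq_apply, Complex.sub_re, Complex.sub_im, Complex.mul_re,
    Complex.mul_im, Complex.conj_re, Complex.conj_im]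
  ring

lemma nuC_flip (r : ℂ) (q : ℂ[X]) :
    nuC ((X - C r) * q) = nuC ((C ((starRingEnd ℂ) r) * X - C 1) * q) := by
  set m := q.natDegree + 1 with hm
  have hd1 : ((X - C r) * q).natDegree < m + 1 := by
    calc ((X - C r) * q).natDegree ≤ (X - C r).natDegree + q.natDegree := natDegree_mul_le
      _ ≤ 1 + q.natDegree := by rw [natDegree_X_sub_C]
      _ < m + 1 := by omega
  have hd2 : ((C ((starRingEnd ℂ) r) * X - C 1) * q).natDegree < m + 1 := by
    have h3 : (C ((starRingEnd ℂ) r) * X - C 1).natDegree ≤ 1 := by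
      apply (natDegree_sub_le _ _).trans
      simp only [max_le_iff, natDegree_C]
      exact ⟨le_trans (natDegree_C_mul_le _ _) natDegree_X_le, Nat.zero_le _⟩
    calc ((C ((starRingEnd ℂ) r) * X - C 1) * q).natDegree
        ≤ (C ((starRingEnd ℂ) r) * X - C 1).natDegree + q.natDegree := natDegree_mul_le
      _ ≤ 1 + q.natDegree := by omega
      _ < m + 1 := by omega
  rw [nuC_eq_range _ hd1, nuC_eq_range _ hd2]
  conv_lhs => rw [Finset.sum_range_succ']
  conv_rhs => rw [Finset.sum_range_succ']
  have c0 : ((X - C r) * q).coeff 0 = - (r * q.coeff 0) := by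
    rw [mul_coeff_zero]; simp
  have c0' : ((C ((starRingEnd ℂ) r) * X - C 1) * q).coeff 0 = - q.coeff 0 := by
    rw [mul_coeff_zero]; simp
  have c1 : ∀ k, ((X - C r) * q).coeff (k + 1) = q.coeff k - r * q.coeff (k + 1) := by
    intro k; rw [sub_mul, coeff_sub, coeff_X_mul, coeff_C_mul]
  have c1' : ∀ k, ((C ((starRingEnd ℂ) r) * X - C 1) * q).coeff (k + 1)
      = (starRingEnd ℂ) r * q.coeff k - q.coeff (k + 1) := by
    intro k; simp [sub_mul, coeff_sub, mul_assoc, coeff_C_mul, coeff_X_mul]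
  simp only [c0, c0', c1, c1']
  have hsplit : ∑ k ∈ Finset.range m, Complex.normSq (q.coeff k - r * q.coeff (k + 1))
      = (∑ k ∈ Finset.range m,
          Complex.normSq ((starRingEnd ℂ) r * q.coeff k - q.coeff (k + 1)))
        + (1 - Complex.normSq r) *
          ∑ k ∈ Finset.range m, (Complex.normSq (q.coeff k) - Complex.normSq (q.coeff (k + 1))) := by
    rw [Finset.mul_sum, ← Finset.sum_add_distrib]
    exact Finset.sum_congr rfl fun k _ => flip_key r _ _
  rw [hsplit, Finset.sum_range_sub' (fun k => Complex.normSq (q.coeff k))]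
  have hz : q.coeff m = 0 := coeff_natDegree_succ_eq_zero (p := q)
  rw [hz]
  have h1 : Complex.normSq (-(r * q.coeff 0)) = Complex.normSq r * Complex.normSq (q.coeff 0) := by
    rw [Complex.normSq_neg, Complex.normSq_mul]
  have h2 : Complex.normSq (-q.coeff 0) = Complex.normSq (q.coeff 0) := Complex.normSq_neg _
  rw [h1, h2, Complex.normSq_zero]
  ring

noncomputable def flipF (r : ℂ) : ℂ[X] :=
  if 1 ≤ Complex.normSq r then C ((starRingEnd ℂ) r) * X - C 1 else X - C r

lemma nuC_prod_flip (s : Multiset ℂ) : ∀ q : ℂ[X],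
    nuC ((s.map fun r => X - C r).prod * q) = nuC ((s.map flipF).prod * q) := by
  induction s using Multiset.induction with
  | empty => intro q; simp
  | cons r t ih =>
    intro q
    rw [Multiset.map_cons, Multiset.map_cons, Multiset.prod_cons, Multiset.prod_cons]
    have e1 : (X - C r) * (t.map fun r => X - C r).prod * q
        = (t.map fun r => X - C r).prod * ((X - C r) * q) := by ring
    have e2 : flipF r * (t.map flipF).prod * q = (t.map flipF).prod * (flipF r * q) := by ring
    rw [e1, e2, ih ((X - C r) * q)]
    by_cases hb : 1 ≤ Complex.normSq r
    · have e3 : (t.map flipF).prod * ((X - C r) * q) = (X - C r) * ((t.map flipF).prod * q) := by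
        ring
      have e4 : (t.map flipF).prod * (flipF r * q) = flipF r * ((t.map flipF).prod * q) := by ring
      rw [e3, e4, flipF, if_pos hb, nuC_flip]
    · rw [flipF, if_neg hb]

lemma normSq_lc_flip_prod (c : ℂ) (s : Multiset ℂ) :
    Complex.normSq ((C c * (s.map flipF).prod).leadingCoeff)
      = Complex.normSq c * (s.map fun r => max 1 (Complex.normSq r)).prod := by
  induction s using Multiset.induction with
  | empty => simp
  | cons r t ih =>
    rw [Multiset.map_cons, Multiset.prod_cons, Multiset.map_cons, Multiset.prod_cons,
      show C c * (flipF r * (t.map flipF).prod) = flipF r * (C c * (t.map flipF).prod) by ring,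
      leadingCoeff_mul, Complex.normSq_mul, ih]
    have hlc : Complex.normSq (flipF r).leadingCoeff = max 1 (Complex.normSq r) := by
      by_cases hb : 1 ≤ Complex.normSq r
      · rw [flipF, if_pos hb]
        have hr0 : r ≠ 0 := by
          intro h; rw [h, map_zero] at hb; norm_num at hb
        have hr : (starRingEnd ℂ) r ≠ 0 := by simpa using hr0
        have : (C ((starRingEnd ℂ) r) * X - C 1).leadingCoeff = (starRingEnd ℂ) r := by
          rw [show (C ((starRingEnd ℂ) r) * X - C 1 : ℂ[X])
              = C ((starRingEnd ℂ) r) * X + C (-1) by rw [map_neg]; ring]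
          exact leadingCoeff_linear hr
        rw [this, Complex.normSq_conj, max_eq_right hb]
      · rw [flipF, if_neg hb, (monic_X_sub_C r).leadingCoeff, Complex.normSq_one,
          max_eq_left (le_of_not_ge hb)]
    rw [hlc]; ring

/-- squared Mahler measure -/
noncomputable def M2 (p : ℂ[X]) : ℝ :=
  Complex.normSq p.leadingCoeff * (p.roots.map fun r => max 1 (Complex.normSq r)).prod

lemma landau (p : ℂ[X]) : M2 p ≤ nuC p := by
  by_cases hp : p = 0
  · simp [hp, M2, nuC]
  have hfac : p = C p.leadingCoeff * (p.roots.map fun r => X - C r).prod :=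
    (IsAlgClosed.splits p).eq_prod_roots
  calc M2 p = Complex.normSq ((C p.leadingCoeff * (p.roots.map flipF).prod).leadingCoeff) :=
        (normSq_lc_flip_prod _ _).symm
    _ ≤ nuC (C p.leadingCoeff * (p.roots.map flipF).prod) := normSq_leadingCoeff_le_nuC _
    _ = nuC ((p.roots.map flipF).prod * C p.leadingCoeff) := by rw [mul_comm]
    _ = nuC ((p.roots.map fun r => X - C r).prod * C p.leadingCoeff) :=
        (nuC_prod_flip p.roots (C p.leadingCoeff)).symm
    _ = nuC p := by rw [mul_comm, ← hfac]

/-- Mahler measure (norm version). -/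
noncomputable def Mn (p : ℂ[X]) : ℝ :=
  ‖p.leadingCoeff‖ * (p.roots.map fun r => max 1 ‖r‖).prod

lemma one_le_prod_max (s : Multiset ℂ) : 1 ≤ (s.map fun r => max 1 ‖r‖).prod := by
  induction s using Multiset.induction with
  | empty => simp
  | cons r w ih =>
    rw [Multiset.map_cons, Multiset.prod_cons]
    nlinarith [le_max_left 1 ‖r‖]

lemma prod_norm_le_prod_max_self (t : Multiset ℂ) :
    (t.map fun r => ‖r‖).prod ≤ (t.map fun r => max 1 ‖r‖).prod := by
  induction t using Multiset.induction with
  | empty => simp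
  | cons r w ih =>
    rw [Multiset.map_cons, Multiset.prod_cons, Multiset.map_cons, Multiset.prod_cons]
    have hw : 0 ≤ (w.map fun r => ‖r‖).prod :=
      Multiset.prod_nonneg (by intro x hx; obtain ⟨r, _, rfl⟩ := Multiset.mem_map.1 hx
                               exact norm_nonneg _)
    exact mul_le_mul (le_max_right _ _) ih hw (le_trans zero_le_one (le_max_left _ _))

lemma Mn_nonneg (p : ℂ[X]) : 0 ≤ Mn p :=
  mul_nonneg (norm_nonneg _) (le_trans zero_le_one (one_le_prod_max _))

lemma max_one_sq (x : ℝ) (hx : 0 ≤ x) : max 1 (x ^ 2) = (max 1 x) ^ 2 := by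
  rcases le_total 1 x with h | h
  · rw [max_eq_right (by nlinarith), max_eq_right h]
  · rw [max_eq_left (by nlinarith), max_eq_left h, one_pow]

lemma Mn_sq (p : ℂ[X]) : Mn p ^ 2 = M2 p := by
  rw [Mn, M2, mul_pow, ← Complex.sq_norm]
  congr 1
  rw [← Multiset.prod_map_pow]
  congr 1
  apply Multiset.map_congr rfl
  intro r _
  rw [← max_one_sq _ (norm_nonneg r), ← Complex.sq_norm]

lemma Mn_le_sqrt_nuC (p : ℂ[X]) : Mn p ≤ Real.sqrt (nuC p) :=
  Real.le_sqrt_of_sq_le (by rw [Mn_sq]; exact landau p)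

lemma Mn_mul (p q : ℂ[X]) (hp : p ≠ 0) (hq : q ≠ 0) : Mn (p * q) = Mn p * Mn q := by
  rw [Mn, Mn, Mn, leadingCoeff_mul, norm_mul, roots_mul (mul_ne_zero hp hq),
    Multiset.map_add, Multiset.prod_add]
  ring

lemma prod_norm_le_prod_max {t s : Multiset ℂ} (h : t ≤ s) :
    (t.map fun r => ‖r‖).prod ≤ (s.map fun r => max 1 ‖r‖).prod := by
  obtain ⟨u, rfl⟩ := Multiset.le_iff_exists_add.1 h
  rw [Multiset.map_add, Multiset.prod_add]
  have h1 := prod_norm_le_prod_max_self t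
  calc (t.map fun r => ‖r‖).prod ≤ (t.map fun r => max 1 ‖r‖).prod := h1
    _ = (t.map fun r => max 1 ‖r‖).prod * 1 := (mul_one _).symm
    _ ≤ (t.map fun r => max 1 ‖r‖).prod * (u.map fun r => max 1 ‖r‖).prod :=
        mul_le_mul_of_nonneg_left (one_le_prod_max u)
          (le_trans zero_le_one (one_le_prod_max t))

lemma norm_multiset_prod_eq (t : Multiset ℂ) : ‖t.prod‖ = (t.map fun r => ‖r‖).prod := by
  induction t using Multiset.induction with
  | empty => simp
  | cons r w ih => simp [Multiset.prod_cons, norm_mul, ih]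

lemma esymm_norm_le (s : Multiset ℂ) (k : ℕ) :
    ‖s.esymm k‖ ≤ ((Multiset.card s).choose k : ℝ) * (s.map fun r => max 1 ‖r‖).prod := by
  rw [Multiset.esymm]
  refine (norm_multiset_sum_le _).trans ?_
  rw [Multiset.map_map]
  have hb : ∀ x ∈ (s.powersetCard k).map fun t => ‖Multiset.prod t‖,
      x ≤ (s.map fun r => max 1 ‖r‖).prod := by
    intro x hx
    obtain ⟨t, ht, rfl⟩ := Multiset.mem_map.1 hx
    rw [norm_multiset_prod_eq]
    exact prod_norm_le_prod_max (Multiset.mem_powersetCard.1 ht).1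
  refine (Multiset.sum_le_card_nsmul _ _ hb).trans ?_
  rw [Multiset.card_map, Multiset.card_powersetCard, nsmul_eq_mul]

lemma choose_le_two_pow' (n k : ℕ) : n.choose k ≤ 2 ^ n := by
  by_cases h : k ≤ n
  · calc n.choose k ≤ ∑ m ∈ Finset.range (n + 1), n.choose m :=
        Finset.single_le_sum (fun _ _ => Nat.zero_le _) (Finset.mem_range.2 (by omega))
      _ = 2 ^ n := Nat.sum_range_choose n
  · rw [Nat.choose_eq_zero_of_lt (by omega)]; exact Nat.zero_le _

lemma norm_coeff_le_Mn (p : ℂ[X]) (j : ℕ) : ‖p.coeff j‖ ≤ 2 ^ p.natDegree * Mn p := by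
  by_cases hp : p = 0
  · simp [hp, Mn]
  by_cases hj : p.natDegree < j
  · rw [coeff_eq_zero_of_natDegree_lt hj, norm_zero]
    exact mul_nonneg (by positivity) (Mn_nonneg p)
  push_neg at hj
  have hsp := IsAlgClosed.splits p
  have hcard : Multiset.card p.roots = p.natDegree := (splits_iff_card_roots).1 hsp
  rw [coeff_eq_esymm_roots_of_splits hsp hj]
  rw [norm_mul, norm_mul, norm_pow, norm_neg, norm_one, one_pow, mul_one]
  calc ‖p.leadingCoeff‖ * ‖p.roots.esymm (p.natDegree - j)‖
      ≤ ‖p.leadingCoeff‖ * (((Multiset.card p.roots).choose (p.natDegree - j) : ℝ)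
          * (p.roots.map fun r => max 1 ‖r‖).prod) :=
        mul_le_mul_of_nonneg_left (esymm_norm_le _ _) (norm_nonneg _)
    _ = ((Multiset.card p.roots).choose (p.natDegree - j) : ℝ) * Mn p := by rw [Mn]; ring
    _ ≤ 2 ^ p.natDegree * Mn p := by
        refine mul_le_mul_of_nonneg_right ?_ (Mn_nonneg p)
        rw [hcard]
        calc ((p.natDegree.choose (p.natDegree - j)) : ℝ)
            ≤ ((2 ^ p.natDegree : ℕ) : ℝ) := Nat.cast_le.2 (choose_le_two_pow' _ _)
          _ = 2 ^ p.natDegree := by push_cast; ring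


lemma intcast_inj : Function.Injective (Int.castRingHom ℂ) := fun a b h => by
  have : ((a : ℤ) : ℂ) = ((b : ℤ) : ℂ) := h
  exact_mod_cast this

lemma one_le_Mn_int (p : Polynomial ℤ) (hp : p ≠ 0) :
    1 ≤ Mn (p.map (Int.castRingHom ℂ)) := by
  have hlc : (p.map (Int.castRingHom ℂ)).leadingCoeff = ((p.leadingCoeff : ℤ) : ℂ) :=
    leadingCoeff_map_of_injective intcast_inj p
  have h1 : (1 : ℝ) ≤ ‖(p.map (Int.castRingHom ℂ)).leadingCoeff‖ := by
    rw [hlc]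
    have : p.leadingCoeff ≠ 0 := leadingCoeff_ne_zero.2 hp
    calc (1 : ℝ) = ((1 : ℤ) : ℝ) := by norm_num
      _ ≤ ((|p.leadingCoeff| : ℤ) : ℝ) := by exact_mod_cast Int.one_le_abs this
      _ = ‖((p.leadingCoeff : ℤ) : ℂ)‖ := by
          rw [Complex.norm_intCast, Int.cast_abs]
  calc (1:ℝ) = 1 * 1 := (one_mul 1).symm
    _ ≤ ‖(p.map (Int.castRingHom ℂ)).leadingCoeff‖
          * ((p.map (Int.castRingHom ℂ)).roots.map fun r => max 1 ‖r‖).prod :=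
        mul_le_mul h1 (one_le_prod_max _) zero_le_one (le_trans zero_le_one h1)

lemma nuC_int (p : Polynomial ℤ) :
    nuC (p.map (Int.castRingHom ℂ)) = ∑ k ∈ p.support, ((p.coeff k : ℝ)) ^ 2 := by
  rw [nuC, support_map_of_injective p intcast_inj]
  refine Finset.sum_congr rfl fun k _ => ?_
  rw [coeff_map]
  have : ((p.coeff k : ℤ) : ℂ) = (((p.coeff k : ℤ) : ℝ) : ℂ) := by push_cast; ring
  rw [eq_intCast, this, Complex.normSq_ofReal]
  ring

lemma univ_mignotte (A B : Polynomial ℤ) (hA : A ≠ 0) (hB : B ≠ 0) (hdvd : A ∣ B)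
    (D : ℕ) (hD : B.natDegree ≤ D) (j : ℕ) :
    ((|A.coeff j| : ℤ) : ℝ) ≤ 2 ^ D * Real.sqrt (∑ k ∈ B.support, ((B.coeff k : ℝ)) ^ 2) := by
  obtain ⟨Q, hQ⟩ := hdvd
  have hQ0 : Q ≠ 0 := by rintro rfl; rw [mul_zero] at hQ; exact hB hQ
  set A' := A.map (Int.castRingHom ℂ) with hA'
  set B' := B.map (Int.castRingHom ℂ) with hB'
  set Q' := Q.map (Int.castRingHom ℂ) with hQ'
  have hA'0 : A' ≠ 0 := (Polynomial.map_ne_zero_iff intcast_inj).2 hA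
  have hQ'0 : Q' ≠ 0 := (Polynomial.map_ne_zero_iff intcast_inj).2 hQ0
  have hmul : B' = A' * Q' := by rw [hA', hB', hQ', hQ, Polynomial.map_mul]
  have hdeg : A'.natDegree ≤ D := by
    rw [hA', natDegree_map_eq_of_injective intcast_inj]
    exact le_trans (natDegree_le_of_dvd ⟨Q, hQ⟩ hB) hD
  have step1 : ((|A.coeff j| : ℤ) : ℝ) = ‖A'.coeff j‖ := by
    rw [hA', coeff_map, eq_intCast, Complex.norm_intCast, Int.cast_abs]
  have step2 : ‖A'.coeff j‖ ≤ 2 ^ D * Mn A' := by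
    refine (norm_coeff_le_Mn A' j).trans ?_
    exact mul_le_mul_of_nonneg_right
      (pow_le_pow_right₀ one_le_two hdeg) (Mn_nonneg _)
  have step3 : Mn A' ≤ Mn B' := by
    rw [hmul, Mn_mul A' Q' hA'0 hQ'0]
    calc Mn A' = Mn A' * 1 := (mul_one _).symm
      _ ≤ Mn A' * Mn Q' := mul_le_mul_of_nonneg_left (one_le_Mn_int Q hQ0) (Mn_nonneg _)
  calc ((|A.coeff j| : ℤ) : ℝ) = ‖A'.coeff j‖ := step1
    _ ≤ 2 ^ D * Mn A' := step2
    _ ≤ 2 ^ D * Mn B' := mul_le_mul_of_nonneg_left step3 (by positivity)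
    _ ≤ 2 ^ D * Real.sqrt (nuC B') :=
        mul_le_mul_of_nonneg_left (Mn_le_sqrt_nuC B') (by positivity)
    _ = 2 ^ D * Real.sqrt (∑ k ∈ B.support, ((B.coeff k : ℝ)) ^ 2) := by rw [nuC_int]

/-- Kronecker encoding of an exponent vector. -/
def encF (d : ℕ) {n : ℕ} (e : Fin n →₀ ℕ) : ℕ := ∑ i, e i * (d + 1) ^ (i : ℕ)

lemma enc_fun_inj (d : ℕ) : ∀ (n : ℕ) (f g : Fin n → ℕ), (∀ i, f i ≤ d) → (∀ i, g i ≤ d) →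
    (∑ i, f i * (d + 1) ^ (i : ℕ)) = (∑ i, g i * (d + 1) ^ (i : ℕ)) → f = g := by
  intro n
  induction n with
  | zero => intro f g _ _ _; funext i; exact i.elim0
  | succ m ih =>
    intro f g hf hg hsum
    rw [Fin.sum_univ_succ, Fin.sum_univ_succ] at hsum
    have key : ∀ h : Fin (m + 1) → ℕ,
        (∑ i : Fin m, h i.succ * (d + 1) ^ ((i.succ : Fin (m + 1)) : ℕ))
          = (∑ i : Fin m, h i.succ * (d + 1) ^ (i : ℕ)) * (d + 1) := by
      intro h
      rw [Finset.sum_mul]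
      refine Finset.sum_congr rfl fun i _ => ?_
      rw [Fin.val_succ, pow_succ]; ring
    rw [key f, key g] at hsum
    simp only [Fin.val_zero, pow_zero, mul_one] at hsum
    set F := ∑ i : Fin m, f i.succ * (d + 1) ^ (i : ℕ) with hF
    set G := ∑ i : Fin m, g i.succ * (d + 1) ^ (i : ℕ) with hG
    have h0 : f 0 = g 0 := by
      have e1 : (f 0 + F * (d + 1)) % (d + 1) = f 0 := by
        rw [Nat.add_mul_mod_self_right, Nat.mod_eq_of_lt (by have := hf 0; omega)]
      have e2 : (g 0 + G * (d + 1)) % (d + 1) = g 0 := by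
        rw [Nat.add_mul_mod_self_right, Nat.mod_eq_of_lt (by have := hg 0; omega)]
      rw [← e1, ← e2, hsum]
    have hFG : F = G := by
      rw [h0] at hsum
      have h2 : F * (d + 1) = G * (d + 1) := Nat.add_left_cancel hsum
      exact Nat.eq_of_mul_eq_mul_right (by omega) h2
    have htail := ih (fun i => f i.succ) (fun i => g i.succ)
      (fun i => hf _) (fun i => hg _) hFG
    funext i
    refine Fin.cases h0 (fun j => ?_) i
    exact congrFun htail j

lemma encF_inj (d : ℕ) {n : ℕ} (e e' : Fin n →₀ ℕ) (he : ∀ i, e i ≤ d) (he' : ∀ i, e' i ≤ d)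
    (h : encF d e = encF d e') : e = e' := by
  have := enc_fun_inj d n (fun i => e i) (fun i => e' i) he he' h
  ext i
  exact congrFun this i

/-- Kronecker substitution ring hom. -/
noncomputable def psiK (d n : ℕ) : MvPolynomial (Fin n) ℤ →+* Polynomial ℤ :=
  MvPolynomial.eval₂Hom Polynomial.C (fun i => Polynomial.X ^ (d + 1) ^ (i : ℕ))

lemma psiK_eq (d n : ℕ) (p : MvPolynomial (Fin n) ℤ) :
    psiK d n p = ∑ u ∈ p.support, Polynomial.C (MvPolynomial.coeff u p) * Polynomial.X ^ encF d u := by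
  rw [psiK, MvPolynomial.coe_eval₂Hom, MvPolynomial.eval₂_eq']
  refine Finset.sum_congr rfl fun u _ => ?_
  congr 1
  rw [show (∏ i : Fin n, ((Polynomial.X : Polynomial ℤ) ^ (d + 1) ^ (i : ℕ)) ^ u i)
      = ∏ i : Fin n, (Polynomial.X : Polynomial ℤ) ^ ((d + 1) ^ (i : ℕ) * u i) by
        exact Finset.prod_congr rfl fun i _ => (pow_mul _ _ _).symm,
    Finset.prod_pow_eq_pow_sum]
  congr 1
  rw [encF]
  exact Finset.sum_congr rfl fun i _ => mul_comm _ _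

lemma digits_le {n d : ℕ} (p : MvPolynomial (Fin n) ℤ) (hdp : ∀ i, p.degreeOf i ≤ d)
    {u : Fin n →₀ ℕ} (hu : u ∈ p.support) : ∀ i, u i ≤ d := by
  intro i
  exact MvPolynomial.degreeOf_le_iff.1 (hdp i) u hu

lemma geo_sum (d : ℕ) : ∀ n : ℕ, (∑ i ∈ Finset.range n, d * (d + 1) ^ i) = (d + 1) ^ n - 1 := by
  intro n
  induction n with
  | zero => simp
  | succ m ih =>
    rw [Finset.sum_range_succ, ih, pow_succ]
    have h1 : 1 ≤ (d + 1) ^ m := Nat.one_le_pow _ _ (by omega)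
    generalize hA : (d + 1) ^ m = A at *
    have h2 : A * (d + 1) = A + d * A := by ring
    generalize hB : d * A = B at *
    omega

lemma encF_le {n d : ℕ} (e : Fin n →₀ ℕ) (he : ∀ i, e i ≤ d) :
    encF d e ≤ (d + 1) ^ n - 1 := by
  calc encF d e ≤ ∑ i : Fin n, d * (d + 1) ^ (i : ℕ) :=
      Finset.sum_le_sum fun i _ => Nat.mul_le_mul_right _ (he i)
    _ = ∑ i ∈ Finset.range n, d * (d + 1) ^ i := Fin.sum_univ_eq_sum_range (fun i => d * (d + 1) ^ i) n
    _ = (d + 1) ^ n - 1 := geo_sum d n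

lemma psiK_natDegree {n d : ℕ} (p : MvPolynomial (Fin n) ℤ) (hdp : ∀ i, p.degreeOf i ≤ d) :
    (psiK d n p).natDegree ≤ (d + 1) ^ n - 1 := by
  rw [psiK_eq]
  refine natDegree_sum_le_of_forall_le _ _ fun u hu => ?_
  refine (natDegree_C_mul_le _ _).trans ?_
  rw [natDegree_X_pow]
  exact encF_le u (digits_le p hdp hu)

lemma psiK_coeff {n d : ℕ} (p : MvPolynomial (Fin n) ℤ) (hdp : ∀ i, p.degreeOf i ≤ d)
    (e : Fin n →₀ ℕ) (he : ∀ i, e i ≤ d) :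
    (psiK d n p).coeff (encF d e) = MvPolynomial.coeff e p := by
  rw [psiK_eq, finset_sum_coeff]
  simp only [coeff_C_mul, coeff_X_pow]
  have hcong : ∀ u ∈ p.support,
      (MvPolynomial.coeff u p * if encF d e = encF d u then 1 else 0)
        = if u = e then MvPolynomial.coeff u p else 0 := by
    intro u hu
    by_cases h : u = e
    · subst h; simp
    · rw [if_neg h, if_neg, mul_zero]
      intro hEq
      exact h (encF_inj d u e (digits_le p hdp hu) he hEq.symm)
  rw [Finset.sum_congr rfl hcong, Finset.sum_ite_eq' p.support e (fun u => MvPolynomial.coeff u p)]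
  by_cases he2 : e ∈ p.support
  · rw [if_pos he2]
  · rw [if_neg he2, eq_comm]
    exact MvPolynomial.notMem_support_iff.1 he2

lemma psiK_coeff_zero {n d : ℕ} (p : MvPolynomial (Fin n) ℤ) (k : ℕ)
    (hk : k ∉ p.support.image (encF d)) : (psiK d n p).coeff k = 0 := by
  rw [psiK_eq, finset_sum_coeff]
  refine Finset.sum_eq_zero fun u hu => ?_
  rw [coeff_C_mul, coeff_X_pow, if_neg, mul_zero]
  intro h
  exact hk (Finset.mem_image.2 ⟨u, hu, h.symm⟩)

lemma psiK_ne_zero {n d : ℕ} (p : MvPolynomial (Fin n) ℤ) (hp : p ≠ 0)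
    (hdp : ∀ i, p.degreeOf i ≤ d) : psiK d n p ≠ 0 := by
  obtain ⟨e, he⟩ := MvPolynomial.ne_zero_iff.1 hp
  have hes : e ∈ p.support := MvPolynomial.mem_support_iff.2 he
  intro h
  apply he
  rw [← psiK_coeff p hdp e (digits_le p hdp hes), h, coeff_zero]

lemma psiK_sum_sq {n d : ℕ} (p : MvPolynomial (Fin n) ℤ) (hdp : ∀ i, p.degreeOf i ≤ d) :
    (∑ k ∈ (psiK d n p).support, (((psiK d n p).coeff k : ℝ)) ^ 2)
      = ∑ e ∈ p.support, (((MvPolynomial.coeff e p : ℤ) : ℝ)) ^ 2 := by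
  have hsub : (psiK d n p).support ⊆ p.support.image (encF d) := by
    intro k hk
    by_contra h
    exact (Polynomial.mem_support_iff.1 hk) (psiK_coeff_zero p k h)
  rw [Finset.sum_subset hsub (fun k _ hk => by
    rw [Polynomial.notMem_support_iff.1 hk]; norm_num)]
  rw [Finset.sum_image (fun e he e' he' h =>
    encF_inj d e e' (digits_le p hdp he) (digits_le p hdp he') h)]
  refine Finset.sum_congr rfl fun e he => ?_
  rw [psiK_coeff p hdp e (digits_le p hdp he)]

/-- Mignotte-type bound: if `a, b` are nonzero polynomials in `n` variables over `ℤ`, `b` is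
a multiple of `a`, and both have degree at most `d` in each variable separately, then
`‖b‖₂ ≥ 2^(−(d+1)ⁿ + 1) * ‖a‖_∞`. -/
theorem stmt_12 (n : ℕ) (hn : 1 ≤ n) (d : ℕ) (a b : MvPolynomial (Fin n) ℤ)
    (ha : a ≠ 0) (hb : b ≠ 0) (hdvd : a ∣ b)
    (hda : ∀ i, a.degreeOf i ≤ d) (hdb : ∀ i, b.degreeOf i ≤ d) :
    Real.sqrt (∑ e ∈ b.support, (((b.coeff e : ℤ) : ℝ)) ^ 2) ≥
      (2 : ℝ) ^ (-(((d : ℤ) + 1) ^ n) + 1) *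
        ((a.support.sup fun e => (a.coeff e).natAbs : ℕ) : ℝ) := by
  have hpow : 1 ≤ (d + 1) ^ n := Nat.one_le_pow _ _ (by omega)
  set E : ℕ := (d + 1) ^ n - 1 with hE
  have hexp : (-(((d : ℤ) + 1) ^ n) + 1) = -(E : ℤ) := by
    rw [hE, Nat.cast_sub hpow]
    push_cast
    ring
  rw [hexp]
  set A := psiK d n a with hAdef
  set B := psiK d n b with hBdef
  have hA0 : A ≠ 0 := psiK_ne_zero a ha hda
  have hB0 : B ≠ 0 := psiK_ne_zero b hb hdb
  have hdvd' : A ∣ B := map_dvd (psiK d n) hdvd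
  have hdeg : B.natDegree ≤ E := psiK_natDegree b hdb
  obtain ⟨e₀, he₀, hHs⟩ := Finset.exists_mem_eq_sup a.support
    (MvPolynomial.support_nonempty.2 ha) (fun e => (a.coeff e).natAbs)
  have key : (((a.coeff e₀).natAbs : ℕ) : ℝ)
      ≤ 2 ^ E * Real.sqrt (∑ e ∈ b.support, (((b.coeff e : ℤ) : ℝ)) ^ 2) := by
    have h1 := univ_mignotte A B hA0 hB0 hdvd' E hdeg (encF d e₀)
    have h2 : A.coeff (encF d e₀) = a.coeff e₀ :=
      psiK_coeff a hda e₀ (digits_le a hda he₀)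
    rw [h2] at h1
    have h3 := psiK_sum_sq b hdb
    rw [h3] at h1
    have h4 : ((|a.coeff e₀| : ℤ) : ℝ) = (((a.coeff e₀).natAbs : ℕ) : ℝ) := by
      rw [Nat.cast_natAbs, Int.cast_abs]
    rw [h4] at h1
    exact h1
  rw [ge_iff_le, hHs, zpow_neg, zpow_natCast]
  have h2E : (0 : ℝ) < 2 ^ E := by positivity
  calc ((2 : ℝ) ^ E)⁻¹ * (((a.coeff e₀).natAbs : ℕ) : ℝ)
      ≤ ((2 : ℝ) ^ E)⁻¹ * (2 ^ E * Real.sqrt (∑ e ∈ b.support, (((b.coeff e : ℤ) : ℝ)) ^ 2)) :=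
        mul_le_mul_of_nonneg_left key (by positivity)
    _ = Real.sqrt (∑ e ∈ b.support, (((b.coeff e : ℤ) : ℝ)) ^ 2) := by
        field_simp

end MignotteAux
end

section
/- Let f ∈ ℤ[x₁,…,xₙ] be a polynomial in n variables with w > 0 nonzero terms, let N ≥ 1 be an integer, let X₁,…,Xₙ be positive integers, and let (x₁,…,xₙ) be integers with |xᵢ| ≤ Xᵢ for all i. If f(x₁,…,xₙ) ≡ 0 (mod N) and √(∑_e (f_e·X₁^{e₁}⋯Xₙ^{eₙ})²) < N/√w, where the sum runs over the exponent vectors e of the nonzero terms of f with coefficients f_e, then f(x₁,…,xₙ) = 0 holds over the integers ℤ. -/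
/-- Howgrave-Graham: let `f ∈ ℤ[x₁,…,xₙ]` have `w > 0` nonzero terms, `N ≥ 1`, `Xᵢ` positive
integers and `|xᵢ| ≤ Xᵢ`. If `f(x) ≡ 0 (mod N)` and the norm of the scaled polynomial
satisfies `‖f(x₁X₁,…,xₙXₙ)‖₂ < N / √w`, then `f(x) = 0` over `ℤ`. -/
theorem stmt_13 (n : ℕ) (f : MvPolynomial (Fin n) ℤ) (hw : 0 < f.support.card)
    (N : ℕ) (hN : 1 ≤ N) (X : Fin n → ℕ) (hX : ∀ i, 0 < X i)
    (x : Fin n → ℤ) (hx : ∀ i, |x i| ≤ (X i : ℤ))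
    (hmod : (N : ℤ) ∣ MvPolynomial.eval x f)
    (hnorm : Real.sqrt (∑ e ∈ f.support,
        (((f.coeff e : ℤ) : ℝ) * ∏ i, (X i : ℝ) ^ (e i)) ^ 2) <
      (N : ℝ) / Real.sqrt (f.support.card : ℝ)) :
    MvPolynomial.eval x f = 0 := by
  set a : (Fin n →₀ ℕ) → ℝ := fun e => ((f.coeff e : ℤ) : ℝ) * ∏ i, (X i : ℝ) ^ (e i) with ha
  have habs : ∀ e ∈ f.support, |a e| = |((f.coeff e : ℤ) : ℝ)| * ∏ i, (X i : ℝ) ^ (e i) := by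
    intro e _
    rw [ha]
    rw [abs_mul]
    congr 1
    exact abs_of_nonneg (by positivity)
  -- step 1: |eval| ≤ ∑ |a e|
  have h1 : |((MvPolynomial.eval x f : ℤ) : ℝ)| ≤ ∑ e ∈ f.support, |a e| := by
    rw [MvPolynomial.eval_eq']
    push_cast
    refine (Finset.abs_sum_le_sum_abs _ _).trans ?_
    refine Finset.sum_le_sum fun e he => ?_
    rw [habs e he, abs_mul, Finset.abs_prod]
    refine mul_le_mul_of_nonneg_left ?_ (abs_nonneg _)
    refine Finset.prod_le_prod (fun i _ => abs_nonneg _) fun i _ => ?_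
    rw [abs_pow]
    refine pow_le_pow_left₀ (abs_nonneg _) ?_ _
    have := hx i
    rw [show |((x i : ℝ))| = ((|x i| : ℤ) : ℝ) by push_cast; rfl]
    exact_mod_cast this
  -- step 2: Cauchy-Schwarz
  have h2 : (∑ e ∈ f.support, |a e|) ^ 2 ≤
      (f.support.card : ℝ) * ∑ e ∈ f.support, (a e) ^ 2 := by
    have := sq_sum_le_card_mul_sum_sq (s := f.support) (f := fun e => |a e|)
    simpa [sq_abs] using this
  have hwpos : (0 : ℝ) < Real.sqrt (f.support.card : ℝ) := by
    apply Real.sqrt_pos.2; exact_mod_cast hw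
  have h3 : Real.sqrt (∑ e ∈ f.support, (a e) ^ 2) < (N : ℝ) / Real.sqrt _ := hnorm
  have h4 : ∑ e ∈ f.support, |a e| < (N : ℝ) := by
    have hNpos : (0:ℝ) < N := by exact_mod_cast hN
    have hS : ∑ e ∈ f.support, (a e) ^ 2 < ((N : ℝ) / Real.sqrt (f.support.card : ℝ)) ^ 2 :=
      (Real.sqrt_lt' (by positivity)).1 hnorm
    have hsq : ((N : ℝ) / Real.sqrt (f.support.card : ℝ)) ^ 2 = (N:ℝ)^2 / (f.support.card : ℝ) := by
      rw [div_pow, Real.sq_sqrt (by positivity)]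
    have hcard : (0:ℝ) < (f.support.card : ℝ) := by exact_mod_cast hw
    have : (f.support.card : ℝ) * ∑ e ∈ f.support, (a e) ^ 2 < (N:ℝ)^2 := by
      rw [hsq] at hS
      calc (f.support.card : ℝ) * ∑ e ∈ f.support, (a e) ^ 2
          < (f.support.card : ℝ) * ((N:ℝ)^2 / (f.support.card : ℝ)) :=
            mul_lt_mul_of_pos_left hS hcard
        _ = (N:ℝ)^2 := by field_simp
    have hlt2 : (∑ e ∈ f.support, |a e|) ^ 2 < (N:ℝ)^2 := h2.trans_lt this
    exact lt_of_pow_lt_pow_left₀ 2 hNpos.le hlt2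
  have h5 : |MvPolynomial.eval x f| < (N : ℤ) := by
    have : |((MvPolynomial.eval x f : ℤ) : ℝ)| < (N : ℝ) := h1.trans_lt h4
    exact_mod_cast (by rwa [← Int.cast_abs] at this : ((|MvPolynomial.eval x f| : ℤ) : ℝ) < (N : ℝ))
  exact Int.eq_zero_of_abs_lt_dvd hmod h5
end
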